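/- There is no continuous bijection from R to R^2. -/

import Mathlib

open Set Metric

lemma rank_R2 : 1 < Module.rank ℝ (ℝ × ℝ) := by
  rw [rank_prod', Module.rank_self]
  norm_num

/-- A punctured open ball in `ℝ²` is preconnected. -/
lemma punctured_ball_preconnected (c : ℝ × ℝ) {r : ℝ} (hr : 0 < r) (p : ℝ × ℝ) :
    IsPreconnected (ball c r \ {p}) := by
  by_cases hp : p ∈ ball c r
  · set e := OpenPartialHomeomorph.univBall c r with he
    have hsrc : e.source = univ := OpenPartialHomeomorph.univBall_source c r
    have htgt : e.target = ball c r := OpenPartialHomeomorph.univBall_target c hr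
    have hpe : p ∈ e.target := htgt ▸ hp
    set q := e.symm p with hq
    have hqe : e q = p := e.right_inv hpe
    have hinj : InjOn e e.source := e.injOn
    rw [hsrc] at hinj
    have himg : e '' univ = ball c r := by
      rw [← hsrc, e.image_source_eq_target, htgt]
    have hdiff : e '' (univ \ {q}) = ball c r \ {p} := by
      rw [hinj.image_diff, himg, univ_inter, image_singleton, hqe]
    rw [← hdiff]
    have hconn : IsPreconnected ({q}ᶜ : Set (ℝ × ℝ)) :=
      (isConnected_compl_singleton_of_one_lt_rank rank_R2 q).isPreconnected
    rw [compl_eq_univ_diff] at hconn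
    exact hconn.image e (e.continuousOn.mono (by rw [hsrc]; exact subset_univ _))
  · rw [diff_singleton_eq_self hp]
    exact (convex_ball c r).isPreconnected

/-- Auxiliary: two points in a ball with distinct `g`-values give a contradiction. -/
lemma no_injOn_ball_aux (g : ℝ × ℝ → ℝ) (c : ℝ × ℝ) {r : ℝ} (hr : 0 < r)
    (hg : ContinuousOn g (ball c r)) (hinj : InjOn g (ball c r))
    {a b : ℝ × ℝ} (haB : a ∈ ball c r) (hbB : b ∈ ball c r)
    (hlt : g a < g b) : False := by
  set t := (g a + g b) / 2 with ht
  have htu : g a < t := by rw [ht]; linarith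
  have htv : t < g b := by rw [ht]; linarith
  have himg : IsPreconnected (g '' ball c r) :=
    (convex_ball c r).isPreconnected.image g hg
  obtain ⟨x, hxB, hxt⟩ : t ∈ g '' ball c r :=
    himg.ordConnected.out ⟨a, haB, rfl⟩ ⟨b, hbB, rfl⟩ ⟨le_of_lt htu, le_of_lt htv⟩
  have hxa : x ≠ a := by intro h; rw [h] at hxt; rw [← hxt] at htu; exact lt_irrefl _ htu
  have hxb : x ≠ b := by intro h; rw [h] at hxt; rw [← hxt] at htv; exact lt_irrefl _ htv
  have hB' : IsPreconnected (ball c r \ {x}) := punctured_ball_preconnected c hr x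
  have haB' : a ∈ ball c r \ {x} := ⟨haB, fun h => hxa (mem_singleton_iff.mp h).symm⟩
  have hbB' : b ∈ ball c r \ {x} := ⟨hbB, fun h => hxb (mem_singleton_iff.mp h).symm⟩
  have himg' : IsPreconnected (g '' (ball c r \ {x})) :=
    hB'.image g (hg.mono diff_subset)
  obtain ⟨y, hyB', hyt⟩ : t ∈ g '' (ball c r \ {x}) :=
    himg'.ordConnected.out ⟨a, haB', rfl⟩ ⟨b, hbB', rfl⟩ ⟨le_of_lt htu, le_of_lt htv⟩
  have : y = x := hinj hyB'.1 hxB (hyt.trans hxt.symm)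
  exact hyB'.2 (this ▸ mem_singleton x)

/-- No injective continuous-on map from an open ball in `ℝ²` to `ℝ`. -/
lemma no_injOn_ball (g : ℝ × ℝ → ℝ) (c : ℝ × ℝ) {r : ℝ} (hr : 0 < r)
    (hg : ContinuousOn g (ball c r)) (hinj : InjOn g (ball c r)) : False := by
  have hab : c ≠ c + (r / 2, 0) := by
    simp only [ne_eq, left_eq_add, Prod.mk_eq_zero]
    intro h
    linarith [h.1]
  have haB : c ∈ ball c r := mem_ball_self hr
  have hbB : c + (r / 2, 0) ∈ ball c r := by
    have h1 : c - (c + ((r / 2 : ℝ), (0 : ℝ))) = (-(r/2), 0) := by ext <;> simp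
    have : dist (c + ((r / 2 : ℝ), (0 : ℝ))) c = r / 2 := by
      rw [dist_comm, dist_eq_norm, h1, Prod.norm_def]
      simp only [norm_neg, norm_zero, Real.norm_eq_abs]
      rw [abs_of_pos (by linarith : (0:ℝ) < r / 2)]
      exact max_eq_left (by linarith)
    rw [mem_ball, this]
    linarith
  have hgab : g c ≠ g (c + (r / 2, 0)) := fun h => hab (hinj haB hbB h)
  rcases hgab.lt_or_gt with h | h
  · exact no_injOn_ball_aux g c hr hg hinj haB hbB h
  · exact no_injOn_ball_aux g c hr hg hinj hbB haB h

theorem no_continuous_bijection_R_to_R2 :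
    ¬ ∃ f : ℝ → ℝ × ℝ, Continuous f ∧ Function.Bijective f := by
  rintro ⟨f, hf, hbij⟩
  -- cover ℝ² by compact images
  set S : ℕ → Set (ℝ × ℝ) := fun n => f '' Icc (-(n:ℝ)) n with hS
  have hclosed : ∀ n, IsClosed (S n) := fun n =>
    ((isCompact_Icc).image hf).isClosed
  have hcover : (⋃ n, S n) = univ := by
    apply eq_univ_of_forall
    intro y
    obtain ⟨x, rfl⟩ := hbij.2 y
    obtain ⟨n, hn⟩ := exists_nat_ge |x|
    exact mem_iUnion.mpr ⟨n, ⟨x, ⟨neg_le_of_abs_le hn, le_of_abs_le hn⟩, rfl⟩⟩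
  obtain ⟨n, hn⟩ := nonempty_interior_of_iUnion_of_closed hclosed hcover
  obtain ⟨p, hp⟩ := hn
  obtain ⟨r, hr, hball⟩ := Metric.isOpen_iff.mp isOpen_interior p hp
  have hballS : ball p r ⊆ S n := hball.trans interior_subset
  -- the global inverse of f
  set g : ℝ × ℝ → ℝ := Function.invFun f with hg
  have hgr : ∀ y, f (g y) = y := Function.rightInverse_invFun hbij.2
  have hginj : Function.Injective g := fun x y h => by
    rw [← hgr x, ← hgr y, h]
  -- f restricted to the compact interval is a closed embedding
  set K : Set ℝ := Icc (-(n:ℝ)) n with hK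
  have : CompactSpace K := isCompact_iff_compactSpace.mp isCompact_Icc
  set F : K → ℝ × ℝ := K.restrict f with hF
  have hFc : Continuous F := hf.comp continuous_subtype_val
  have hFinj : Function.Injective F := fun x y h =>
    Subtype.ext (hbij.1 h)
  have hemb := (hFc.isClosedEmbedding hFinj).toIsEmbedding
  set h : K ≃ₜ Set.range F := hemb.toHomeomorph with hh
  have hrange : Set.range F = S n := Set.range_restrict f K
  -- g is continuous on S n
  have hgcont : ContinuousOn g (S n) := by
    rw [continuousOn_iff_continuous_restrict]
    have heq : (S n).domRestrict g =
        Subtype.val ∘ h.symm ∘ (Homeomorph.setCongr hrange.symm) := by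
      funext x
      have hx2 : (x : ℝ × ℝ) ∈ Set.range F := hrange.symm ▸ x.2
      set y : Set.range F := ⟨(x : ℝ × ℝ), hx2⟩ with hy
      have h1 : F (h.symm y) = (x : ℝ × ℝ) := by
        have := h.apply_symm_apply y
        have h2 : (h (h.symm y) : ℝ × ℝ) = (y : ℝ × ℝ) := by rw [this]
        exact h2
      have h2 : f ((h.symm y : K) : ℝ) = (x : ℝ × ℝ) := h1
      have h3 : f (g (x : ℝ × ℝ)) = (x : ℝ × ℝ) := hgr _
      have : g (x : ℝ × ℝ) = ((h.symm y : K) : ℝ) := hbij.1 (h3.trans h2.symm)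
      exact this
    rw [heq]
    exact continuous_subtype_val.comp (h.symm.continuous.comp
      (Homeomorph.setCongr hrange.symm).continuous)
  exact no_injOn_ball g p hr (hgcont.mono hballS) (hginj.injOn)
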